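/- Let t ≥ 1 and n ≥ 2 with t ≤ k and t ≤ n − k. Suppose: (i) B is a set of k-element subsets of Ω = {1,…,n} forming a t-(n,k,ν) design, i.e., every t-element subset of Ω is contained in exactly ν ≥ 1 members of B; (ii) D₁ ⊆ S_k is a t-transitive set of permutations of {1,…,k}; (iii) D₂ ⊆ S_{n−k} is a t-transitive set of permutations of {1,…,n−k}. For each block b ∈ B fix bijections φ_b : {1,…,k} → b and ψ_b : {1,…,n−k} → Ω∖b, and let τ(j) = j − k. Then the set D = { (φ_b ∘ π) ∪ (ψ_b ∘ σ ∘ τ) : b ∈ B, π ∈ D₁, σ ∈ D₂ } — where (φ_b ∘ π) ∪ (ψ_b ∘ σ ∘ τ) is the permutation of Ω sending j ↦ φ_b(π(j)) for 1 ≤ j ≤ k and j ↦ ψ_b(σ(j − k)) for k < j ≤ n — is a t-transitive set of permutations in S_n. -/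

import Mathlib

/-- A set `D` of permutations of a finite set `X` is `t`-transitive (as a set) if there
is a constant `c` such that any `t`-tuple of distinct elements is carried to any other
`t`-tuple of distinct elements by exactly `c` elements of `D`. -/
def IsTTransSet {X : Type} (D : Set (Equiv.Perm X)) (t : ℕ) : Prop :=
  ∃ c : ℕ, ∀ a b : Fin t ↪ X,
    {g ∈ D | ∀ i : Fin t, g (a i) = b i}.ncard = c

open Finset Function Equiv

lemma card_fiber_fst {α β : Type*} [DecidableEq α] (s : Finset α) (u : Finset β)
    (r : α × β → Prop) [DecidablePred r] (x : α) (hx : x ∈ s) :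
    (((s ×ˢ u).filter r).filter (fun p => p.1 = x)).card
      = (u.filter (fun y => r (x, y))).card := by
  refine Finset.card_bij' (fun p _ => p.2) (fun y _ => (x, y)) ?hi ?hj ?left ?right
  · intro p hp
    simp only [Finset.mem_filter, Finset.mem_product] at hp
    simp only [Finset.mem_filter]
    obtain ⟨⟨⟨h1, h2⟩, h3⟩, h4⟩ := hp
    refine ⟨h2, ?_⟩
    have : p = (x, p.2) := by rw [← h4]
    rwa [← this]
  · intro y hy
    simp only [Finset.mem_filter] at hy
    simp only [Finset.mem_filter, Finset.mem_product]
    exact ⟨⟨⟨hx, hy.1⟩, hy.2⟩, trivial⟩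
  · rintro ⟨p1, p2⟩ hp
    simp only [Finset.mem_filter, Finset.mem_product] at hp
    obtain ⟨-, h⟩ := hp
    subst h; rfl
  · intro y hy; rfl

lemma card_fiber_snd {α β : Type*} [DecidableEq β] (s : Finset α) (u : Finset β)
    (r : α × β → Prop) [DecidablePred r] (y : β) (hy : y ∈ u) :
    (((s ×ˢ u).filter r).filter (fun p => p.2 = y)).card
      = (s.filter (fun x => r (x, y))).card := by
  refine Finset.card_bij' (fun p _ => p.1) (fun x _ => (x, y)) ?hi ?hj ?left ?right
  · intro p hp
    simp only [Finset.mem_filter, Finset.mem_product] at hp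
    simp only [Finset.mem_filter]
    obtain ⟨⟨⟨h1, h2⟩, h3⟩, h4⟩ := hp
    refine ⟨h1, ?_⟩
    have : p = (p.1, y) := by rw [← h4]
    rwa [← this]
  · intro x hx
    simp only [Finset.mem_filter] at hx
    simp only [Finset.mem_filter, Finset.mem_product]
    exact ⟨⟨⟨hx.1, hy⟩, hx.2⟩, trivial⟩
  · rintro ⟨p1, p2⟩ hp
    simp only [Finset.mem_filter, Finset.mem_product] at hp
    obtain ⟨-, h⟩ := hp
    subst h; rfl
  · intro x hx; rfl
lemma ncard_eq_card_filter {α : Type*} (S : Set α) (hS : S.Finite) (p : α → Prop)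
    [DecidablePred p] :
    {x ∈ S | p x}.ncard = (hS.toFinset.filter p).card := by
  have h : {x ∈ S | p x} = ↑(hS.toFinset.filter p) := by
    ext x; simp [Set.mem_setOf_eq]
  rw [h, Set.ncard_coe_finset]

lemma desc_mul_fact (a : ℕ) : ∀ b ≤ a, a.descFactorial b * (a - b).factorial = a.factorial := by
  intro b
  induction b with
  | zero => simp
  | succ b ih =>
    intro hb
    rw [Nat.descFactorial_succ]
    have h1 : a - b = (a - (b+1)) + 1 := by omega
    have h2 := ih (by omega)
    calc (a - b) * a.descFactorial b * (a - (b+1)).factorial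
        = a.descFactorial b * ((a - (b+1) + 1) * (a - (b+1)).factorial) := by rw [← h1]; ring
      _ = a.descFactorial b * (a - b).factorial := by
          rw [← Nat.factorial_succ, ← h1]
      _ = a.factorial := h2

lemma snoc_inj {s m : ℕ} {a : Fin s → Fin m} (ha : Function.Injective a) (x : Fin m)
    (hx : ∀ i, a i ≠ x) : Function.Injective (Fin.snoc a x : Fin (s+1) → Fin m) := by
  intro i j hij
  induction i using Fin.lastCases with
  | last => induction j using Fin.lastCases with
    | last => rfl
    | cast j => rw [Fin.snoc_last, Fin.snoc_castSucc] at hij; exact absurd hij.symm (hx j)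
  | cast i => induction j using Fin.lastCases with
    | last => rw [Fin.snoc_last, Fin.snoc_castSucc] at hij; exact absurd hij (hx i)
    | cast j => rw [Fin.snoc_castSucc, Fin.snoc_castSucc] at hij
                exact congrArg Fin.castSucc (ha hij)

lemma helper_subsets {α : Type*} [DecidableEq α] (I V : Finset α) (hIV : I ⊆ V) (t : ℕ)
    (hit : I.card ≤ t) :
    ((V.powersetCard t).filter (fun T => I ⊆ T)).card = (V.card - I.card).choose (t - I.card) := by
  rw [← card_sdiff_of_subset hIV, ← Finset.card_powersetCard (t - I.card) (V \ I)]
  refine Finset.card_bij' (fun T _ => T \ I) (fun U _ => U ∪ I) ?hi ?hj ?left ?right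
  · intro T hT
    simp only [mem_filter, mem_powersetCard] at hT
    simp only [mem_powersetCard]
    exact ⟨sdiff_subset_sdiff hT.1.1 (le_refl _), by rw [card_sdiff_of_subset hT.2, hT.1.2]⟩
  · intro U hU
    simp only [mem_powersetCard] at hU
    simp only [mem_filter, mem_powersetCard]
    have hdisj : Disjoint U I := Finset.disjoint_of_subset_left hU.1 (Finset.sdiff_disjoint)
    refine ⟨⟨Finset.union_subset (hU.1.trans (Finset.sdiff_subset)) hIV, ?_⟩,
      Finset.subset_union_right⟩
    rw [Finset.card_union_of_disjoint hdisj, hU.2]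
    omega
  · intro T hT
    simp only [mem_filter, mem_powersetCard] at hT
    exact Finset.sdiff_union_of_subset hT.2
  · intro U hU
    simp only [mem_powersetCard] at hU
    have hdisj : Disjoint U I := Finset.disjoint_of_subset_left hU.1 (Finset.sdiff_disjoint)
    exact Finset.union_sdiff_cancel_right hdisj

lemma lemS {m t : ℕ} (htm : t ≤ m) (DF : Finset (Equiv.Perm (Fin m))) (c : ℕ)
    (hc : ∀ a b : Fin t → Fin m, Function.Injective a → Function.Injective b →
      (DF.filter (fun g => ∀ i, g (a i) = b i)).card = c) :
    ∀ d s, s + d = t → ∀ a b : Fin s → Fin m, Function.Injective a → Function.Injective b →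
      (DF.filter (fun g => ∀ i, g (a i) = b i)).card = c * (m - s).descFactorial d := by
  intro d
  induction d with
  | zero =>
    intro s hs a b ha hb
    have h : s = t := by omega
    subst h
    simpa using hc a b ha hb
  | succ d ih =>
    intro s hs a b ha hb
    have hst : s < t := by omega
    have hsm : s < m := lt_of_lt_of_le hst htm
    have hex : ∃ x : Fin m, ∀ i, a i ≠ x := by
      by_contra h
      push_neg at h
      have hsurj : Function.Surjective a := fun x => by
        obtain ⟨i, hi⟩ := h x; exact ⟨i, hi⟩
      have := Fintype.card_le_of_surjective a hsurj
      simp only [Fintype.card_fin] at this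
      omega
    obtain ⟨x, hx⟩ := hex
    have key : (DF.filter (fun g => ∀ i, g (a i) = b i)).card
        = ∑ y ∈ univ \ univ.image b,
            ((DF.filter (fun g => ∀ i, g (a i) = b i)).filter (fun g => g x = y)).card := by
      apply Finset.card_eq_sum_card_fiberwise (f := fun g : Equiv.Perm (Fin m) => g x)
      intro g hg
      simp only [mem_coe, mem_filter] at hg
      simp only [mem_coe, mem_sdiff, mem_univ, mem_image, true_and]
      rintro ⟨i, hi⟩
      exact hx i (g.injective ((hg.2 i).trans hi))
    rw [key]
    have hfib : ∀ y ∈ univ \ univ.image b,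
        ((DF.filter (fun g => ∀ i, g (a i) = b i)).filter (fun g => g x = y)).card
          = c * (m - (s+1)).descFactorial d := by
      intro y hy
      have hyb : ∀ i, b i ≠ y := by
        simp only [mem_sdiff, mem_univ, mem_image, true_and] at hy
        intro i hi; exact hy ⟨i, hi⟩
      rw [filter_filter]
      have heq : DF.filter (fun g => (∀ i, g (a i) = b i) ∧ g x = y)
          = DF.filter (fun g => ∀ i : Fin (s+1),
              g ((Fin.snoc a x : Fin (s+1) → Fin m) i)
                = (Fin.snoc b y : Fin (s+1) → Fin m) i) := by
        apply filter_congr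
        intro g _
        constructor
        · rintro ⟨h1, h2⟩ i
          induction i using Fin.lastCases with
          | last => simpa [Fin.snoc_last] using h2
          | cast i => simpa [Fin.snoc_castSucc] using h1 i
        · intro h
          constructor
          · intro i
            have := h i.castSucc
            simpa [Fin.snoc_castSucc] using this
          · have := h (Fin.last s)
            simpa [Fin.snoc_last] using this
      rw [heq]
      exact ih (s+1) (by omega) _ _ (snoc_inj ha x hx) (snoc_inj hb y hyb)
    rw [Finset.sum_congr rfl hfib, Finset.sum_const, smul_eq_mul]
    have hcard : (univ \ univ.image b).card = m - s := by
      rw [card_sdiff_of_subset (subset_univ _), card_univ, Fintype.card_fin,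
        Finset.card_image_of_injective _ hb, card_univ, Fintype.card_fin]
    rw [hcard]
    have h1 : m - s = (m - (s+1)) + 1 := by omega
    rw [h1, Nat.succ_descFactorial_succ]
    ring

lemma lemS' {m t : ℕ} (htm : t ≤ m) (DF : Finset (Equiv.Perm (Fin m))) (c : ℕ)
    (hc : ∀ a b : Fin t → Fin m, Function.Injective a → Function.Injective b →
      (DF.filter (fun g => ∀ i, g (a i) = b i)).card = c)
    (ι : Type) [Fintype ι] (sc : ℕ) (hsc : Fintype.card ι = sc) (hι : sc ≤ t)
    (A Bt : ι → Fin m)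
    (hA : Function.Injective A) (hB : Function.Injective Bt) :
    (DF.filter (fun g => ∀ p : ι, g (A p) = Bt p)).card
      = c * (m - sc).descFactorial (t - sc) := by
  subst hsc
  set e := Fintype.equivFin ι with he
  have heq : DF.filter (fun g => ∀ p : ι, g (A p) = Bt p)
      = DF.filter (fun g => ∀ j : Fin (Fintype.card ι),
          g (A (e.symm j)) = Bt (e.symm j)) := by
    apply filter_congr
    intro g _
    constructor
    · intro h j; exact h _
    · intro h p
      have := h (e p)
      simpa using this
  rw [heq]
  exact lemS htm DF c hc (t - Fintype.card ι) (Fintype.card ι) (by omega) _ _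
    (hA.comp e.symm.injective) (hB.comp e.symm.injective)
lemma choose_identity {n k t i : ℕ} (hit : i ≤ t) (htk : t ≤ k) (hkn : k ≤ n) :
    (n-i).choose (t-i) * (n-t).choose (k-t) = (n-i).choose (k-i) * (k-i).choose (t-i) := by
  have e1 : (n-i) - (t-i) = n-t := by omega
  have e2 : (n-t) - (k-t) = n-k := by omega
  have e3 : (k-i) - (t-i) = k-t := by omega
  have e4 : (n-i) - (k-i) = n-k := by omega
  have c1 := Nat.choose_mul_factorial_mul_factorial (show t-i ≤ n-i by omega)
  rw [e1] at c1
  have c2 := Nat.choose_mul_factorial_mul_factorial (show k-t ≤ n-t by omega)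
  rw [e2] at c2
  have c3 := Nat.choose_mul_factorial_mul_factorial (show t-i ≤ k-i by omega)
  rw [e3] at c3
  have c4 := Nat.choose_mul_factorial_mul_factorial (show k-i ≤ n-i by omega)
  rw [e4] at c4
  have hpos : 0 < (t-i).factorial * ((k-t).factorial * (n-k).factorial) :=
    Nat.mul_pos (Nat.factorial_pos _) (Nat.mul_pos (Nat.factorial_pos _) (Nat.factorial_pos _))
  apply Nat.eq_of_mul_eq_mul_right hpos
  calc (n-i).choose (t-i) * (n-t).choose (k-t)
        * ((t-i).factorial * ((k-t).factorial * (n-k).factorial))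
      = (n-i).choose (t-i) * (t-i).factorial
        * ((n-t).choose (k-t) * (k-t).factorial * (n-k).factorial) := by ring
    _ = (n-i).choose (t-i) * (t-i).factorial * (n-t).factorial := by rw [c2]
    _ = (n-i).factorial := c1
    _ = (n-i).choose (k-i) * (k-i).factorial * (n-k).factorial := c4.symm
    _ = (n-i).choose (k-i) * ((k-i).choose (t-i) * (t-i).factorial * (k-t).factorial)
        * (n-k).factorial := by rw [c3]
    _ = (n-i).choose (k-i) * (k-i).choose (t-i)
        * ((t-i).factorial * ((k-t).factorial * (n-k).factorial)) := by ring

lemma final_identity {n k t s ν : ℕ} (hst : s ≤ t) (htk : t ≤ k) (htnk : t ≤ n - k)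
    (hkn : k ≤ n) :
    (ν * (n-t).choose (k-s)) * ((k-s).descFactorial (t-s) * (n-k-t+s).descFactorial s)
      = (ν * (n-k).descFactorial t) * (n-t).choose (k-t) := by
  have d1 := desc_mul_fact (k-s) (t-s) (by omega)
  have e1 : (k-s) - (t-s) = k-t := by omega
  rw [e1] at d1
  have d2 := desc_mul_fact (n-k-t+s) s (by omega)
  have e2 : (n-k-t+s) - s = n-k-t := by omega
  rw [e2] at d2
  have d3 := desc_mul_fact (n-k) t (by omega)
  have c5 := Nat.choose_mul_factorial_mul_factorial (show k-s ≤ n-t by omega)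
  have e5 : (n-t) - (k-s) = n-k-t+s := by omega
  rw [e5] at c5
  have c6 := Nat.choose_mul_factorial_mul_factorial (show k-t ≤ n-t by omega)
  have e6 : (n-t) - (k-t) = n-k := by omega
  rw [e6] at c6
  have hpos : 0 < (k-t).factorial * (n-k-t).factorial :=
    Nat.mul_pos (Nat.factorial_pos _) (Nat.factorial_pos _)
  apply Nat.eq_of_mul_eq_mul_right hpos
  calc (ν * (n-t).choose (k-s)) * ((k-s).descFactorial (t-s) * (n-k-t+s).descFactorial s)
        * ((k-t).factorial * (n-k-t).factorial)
      = ν * ((n-t).choose (k-s) * ((k-s).descFactorial (t-s) * (k-t).factorial)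
          * ((n-k-t+s).descFactorial s * (n-k-t).factorial)) := by ring
    _ = ν * ((n-t).choose (k-s) * (k-s).factorial * (n-k-t+s).factorial) := by
        rw [d1, d2]
    _ = ν * (n-t).factorial := by rw [c5]
    _ = ν * ((n-t).choose (k-t) * (k-t).factorial * (n-k).factorial) := by rw [c6]
    _ = ν * ((n-t).choose (k-t) * (k-t).factorial * ((n-k).descFactorial t
          * (n-k-t).factorial)) := by rw [d3]
    _ = (ν * (n-k).descFactorial t) * (n-t).choose (k-t)
        * ((k-t).factorial * (n-k-t).factorial) := by ring

lemma design_base {n k t ν : ℕ} (htk : t ≤ k) (hkn : k ≤ n)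
    (BF : Finset (Finset (Fin n)))
    (hBcard : ∀ b ∈ BF, b.card = k)
    (hdes : ∀ T : Finset (Fin n), T.card = t → (BF.filter (fun blk => T ⊆ blk)).card = ν)
    (i : ℕ) (hit : i ≤ t) (I : Finset (Fin n)) (hI : I.card = i) :
    (BF.filter (fun blk => I ⊆ blk)).card * (k - i).choose (t - i)
      = ν * (n - i).choose (t - i) := by
  set BFI := BF.filter (fun blk => I ⊆ blk) with hBFI
  set TF := (univ.powersetCard t).filter (fun T => I ⊆ T) with hTF
  set S := (BFI ×ˢ TF).filter (fun p => p.2 ⊆ p.1) with hS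
  have hval1 : ∀ blk ∈ BFI, (S.filter (fun p => p.1 = blk)).card = (k - i).choose (t - i) := by
    intro blk hblk
    rw [hS, card_fiber_fst BFI TF (fun p => p.2 ⊆ p.1) blk hblk]
    have hmem := Finset.mem_filter.mp (hBFI ▸ hblk)
    have hbk : blk.card = k := hBcard blk hmem.1
    have heq2 : TF.filter (fun y => (blk, y).2 ⊆ (blk, y).1)
        = (blk.powersetCard t).filter (fun T => I ⊆ T) := by
      rw [hTF]
      ext T
      simp only [mem_filter, mem_powersetCard, subset_univ, true_and]
      constructor
      · rintro ⟨⟨hc, hIT⟩, hTb⟩; exact ⟨⟨hTb, hc⟩, hIT⟩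
      · rintro ⟨⟨hTb, hc⟩, hIT⟩; exact ⟨⟨hc, hIT⟩, hTb⟩
    rw [heq2, helper_subsets I blk hmem.2 t (by omega), hI, hbk]
  have hval2 : ∀ T ∈ TF, (S.filter (fun p => p.2 = T)).card = ν := by
    intro T hT
    rw [hS, card_fiber_snd BFI TF (fun p => p.2 ⊆ p.1) T hT]
    have hmemT := Finset.mem_filter.mp (hTF ▸ hT)
    have hIT : I ⊆ T := hmemT.2
    have hTcard : T.card = t := (Finset.mem_powersetCard.mp hmemT.1).2
    have heq3 : BFI.filter (fun x => (x, T).2 ⊆ (x, T).1)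
        = BF.filter (fun blk => T ⊆ blk) := by
      rw [hBFI, filter_filter]
      apply filter_congr
      intro blk _
      exact ⟨fun h => h.2, fun h => ⟨hIT.trans h, h⟩⟩
    rw [heq3, hdes T hTcard]
  have way1 : S.card = BFI.card * (k - i).choose (t - i) := by
    rw [Finset.card_eq_sum_card_fiberwise
      (f := fun p : Finset (Fin n) × Finset (Fin n) => p.1) (t := BFI)
      (fun p hp => (Finset.mem_product.mp (Finset.mem_filter.mp hp).1).1),
      Finset.sum_congr rfl hval1, Finset.sum_const, smul_eq_mul]
  have way2 : S.card = (n - i).choose (t - i) * ν := by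
    rw [Finset.card_eq_sum_card_fiberwise
      (f := fun p : Finset (Fin n) × Finset (Fin n) => p.2) (t := TF)
      (fun p hp => (Finset.mem_product.mp (Finset.mem_filter.mp hp).1).2),
      Finset.sum_congr rfl hval2, Finset.sum_const, smul_eq_mul]
    rw [hTF, helper_subsets I univ (subset_univ I) t (by omega), card_univ,
      Fintype.card_fin, hI]
  rw [← way1, way2]; ring

lemma design_count {n k t ν : ℕ} (htk : t ≤ k) (hkn : k ≤ n) (htnk : t ≤ n - k)
    (BF : Finset (Finset (Fin n)))
    (hBcard : ∀ b ∈ BF, b.card = k)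
    (hdes : ∀ T : Finset (Fin n), T.card = t → (BF.filter (fun blk => T ⊆ blk)).card = ν) :
    ∀ j i, i + j ≤ t → ∀ I J : Finset (Fin n), I.card = i → J.card = j → Disjoint I J →
      (BF.filter (fun blk => I ⊆ blk ∧ ∀ x ∈ J, x ∉ blk)).card * (n-t).choose (k-t)
        = ν * ((n-i)-j).choose (k-i) := by
  intro j
  induction j with
  | zero =>
    intro i hij I J hI hJ hdisj
    have hJe : J = ∅ := Finset.card_eq_zero.mp hJ
    subst hJe
    have heq : BF.filter (fun blk => I ⊆ blk ∧ ∀ x ∈ (∅ : Finset (Fin n)), x ∉ blk)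
        = BF.filter (fun blk => I ⊆ blk) := by
      apply filter_congr; intro blk _; simp
    rw [heq]
    have hbase := design_base htk hkn BF hBcard hdes i (by omega) I hI
    have hcpos : 0 < (k-i).choose (t-i) := Nat.choose_pos (by omega)
    apply Nat.eq_of_mul_eq_mul_right hcpos
    calc (BF.filter (fun blk => I ⊆ blk)).card * (n-t).choose (k-t) * (k-i).choose (t-i)
        = (BF.filter (fun blk => I ⊆ blk)).card * (k-i).choose (t-i)
          * (n-t).choose (k-t) := by ring
      _ = ν * (n-i).choose (t-i) * (n-t).choose (k-t) := by rw [hbase]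
      _ = ν * ((n-i).choose (t-i) * (n-t).choose (k-t)) := by ring
      _ = ν * ((n-i).choose (k-i) * (k-i).choose (t-i)) := by
          rw [choose_identity (by omega) htk hkn]
      _ = ν * ((n-i)-0).choose (k-i) * (k-i).choose (t-i) := by
          rw [Nat.sub_zero]; ring
  | succ j ih =>
    intro i hij I J hI hJ hdisj
    have hJne : J.Nonempty := Finset.card_pos.mp (by omega)
    obtain ⟨x, hxJ⟩ := hJne
    have hJ'card : (J.erase x).card = j := by
      rw [Finset.card_erase_of_mem hxJ, hJ]
      omega
    have hxI : x ∉ I := fun h => (Finset.disjoint_left.mp hdisj h) hxJ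
    have hsplit : (BF.filter (fun blk => I ⊆ blk ∧ ∀ y ∈ J.erase x, y ∉ blk)).card
        = (BF.filter (fun blk => insert x I ⊆ blk ∧ ∀ y ∈ J.erase x, y ∉ blk)).card
          + (BF.filter (fun blk => I ⊆ blk ∧ ∀ y ∈ J, y ∉ blk)).card := by
      rw [← Finset.card_filter_add_card_filter_not
        (p := fun blk => x ∈ blk)
        (s := BF.filter (fun blk => I ⊆ blk ∧ ∀ y ∈ J.erase x, y ∉ blk))]
      congr 1
      · rw [filter_filter]
        refine congrArg Finset.card ?_
        apply filter_congr
        intro blk _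
        constructor
        · rintro ⟨⟨hIb, hJ'b⟩, hxb⟩
          exact ⟨Finset.insert_subset hxb hIb, hJ'b⟩
        · rintro ⟨hIxb, hJ'b⟩
          exact ⟨⟨fun y hy => hIxb (Finset.mem_insert_of_mem hy), hJ'b⟩,
            hIxb (Finset.mem_insert_self x I)⟩
      · rw [filter_filter]
        refine congrArg Finset.card ?_
        apply filter_congr
        intro blk _
        constructor
        · rintro ⟨⟨hIb, hJ'b⟩, hxb⟩
          refine ⟨hIb, fun y hy => ?_⟩
          by_cases hyx : y = x
          · subst hyx; exact hxb
          · exact hJ'b y (Finset.mem_erase.mpr ⟨hyx, hy⟩)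
        · rintro ⟨hIb, hJb⟩
          exact ⟨⟨hIb, fun y hy => hJb y (Finset.mem_of_mem_erase hy)⟩, hJb x hxJ⟩
    have h1 := ih i (by omega) I (J.erase x) hI hJ'card
      (Finset.disjoint_of_subset_right (Finset.erase_subset x J) hdisj)
    have hdisj2 : Disjoint (insert x I) (J.erase x) := by
      rw [Finset.disjoint_left]
      intro y hy hy2
      rcases Finset.mem_insert.mp hy with h | h
      · subst h; exact absurd hy2 (Finset.notMem_erase y J)
      · exact (Finset.disjoint_left.mp hdisj h) (Finset.mem_of_mem_erase hy2)
    have h2 := ih (i+1) (by omega) (insert x I) (J.erase x)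
      (by rw [Finset.card_insert_of_notMem hxI, hI]) hJ'card hdisj2
    have hkey : (BF.filter (fun blk => I ⊆ blk ∧ ∀ y ∈ J, y ∉ blk)).card * (n-t).choose (k-t)
          + (BF.filter (fun blk => insert x I ⊆ blk ∧ ∀ y ∈ J.erase x, y ∉ blk)).card
            * (n-t).choose (k-t)
        = (BF.filter (fun blk => I ⊆ blk ∧ ∀ y ∈ J.erase x, y ∉ blk)).card
            * (n-t).choose (k-t) := by
      rw [hsplit]; ring
    rw [h1, h2] at hkey
    have pas : ∀ Aa Bb : ℕ, (Aa+1).choose (Bb+1) = Aa.choose Bb + Aa.choose (Bb+1) :=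
      fun Aa Bb => Nat.choose_succ_succ Aa Bb
    have e1 : (n-i)-j = ((n-i)-(j+1)) + 1 := by omega
    have e2 : k - i = (k-(i+1)) + 1 := by omega
    have e3 : (n-(i+1))-j = (n-i)-(j+1) := by omega
    rw [e1, e2, e3, pas] at hkey
    rw [e2]
    rw [Nat.mul_add] at hkey
    have hkey2 := hkey
    rw [Nat.add_comm (ν * ((n-i)-(j+1)).choose (k-(i+1)))] at hkey2
    exact Nat.add_right_cancel hkey2

set_option maxHeartbeats 1000000 in
/-- **A recursive construction of `t`-transitive sets.**  Given a `t`-(n,k,ν) design `B`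
on `Ω = Fin n`, a `t`-transitive set `D₁ ⊆ S_k` and a `t`-transitive set `D₂ ⊆ S_{n-k}`,
together with bijections `φ_b : {1,…,k} → b` and `ψ_b : {1,…,n-k} → Ω \ b` for each
block `b`, the set
`D = { (φ_b ∘ π) ∪ (ψ_b ∘ σ ∘ τ) : b ∈ B, π ∈ D₁, σ ∈ D₂ }`
is a `t`-transitive set of permutations in `S_n`. -/
theorem construction_tTransitive (t n k : ℕ) (ht : 1 ≤ t) (hn : 2 ≤ n)
    (htk : t ≤ k) (htnk : t ≤ n - k) (hkn : k ≤ n)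
    (ν : ℕ) (hν : 1 ≤ ν)
    (B : Set (Finset (Fin n)))
    (hBcard : ∀ b ∈ B, b.card = k)
    (hdesign : ∀ T : Finset (Fin n), T.card = t → {b ∈ B | T ⊆ b}.ncard = ν)
    (D₁ : Set (Equiv.Perm (Fin k))) (hD₁ : IsTTransSet D₁ t)
    (D₂ : Set (Equiv.Perm (Fin (n - k)))) (hD₂ : IsTTransSet D₂ t)
    (φ : Finset (Fin n) → Fin k → Fin n)
    (hφ : ∀ b ∈ B, Function.Injective (φ b) ∧ Set.range (φ b) = (b : Set (Fin n)))
    (ψ : Finset (Fin n) → Fin (n - k) → Fin n)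
    (hψ : ∀ b ∈ B, Function.Injective (ψ b) ∧ Set.range (ψ b) = (↑b : Set (Fin n))ᶜ)
    (D : Set (Equiv.Perm (Fin n)))
    (hD : D = {g : Equiv.Perm (Fin n) | ∃ b ∈ B, ∃ π ∈ D₁, ∃ σ ∈ D₂,
      ∀ j : Fin n, g j =
        if h : (j : ℕ) < k then φ b (π ⟨(j : ℕ), h⟩)
        else ψ b (σ ⟨(j : ℕ) - k, by have := j.isLt; omega⟩)}) :
    IsTTransSet D t := by
  classical
  obtain ⟨c₁, hc₁⟩ := hD₁
  obtain ⟨c₂, hc₂⟩ := hD₂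
  have htn : t ≤ n := by omega
  have hBfin : B.Finite := Set.toFinite B
  have hD1fin : D₁.Finite := Set.toFinite D₁
  have hD2fin : D₂.Finite := Set.toFinite D₂
  set BF := hBfin.toFinset with hBFdef
  set D1F := hD1fin.toFinset with hD1Fdef
  set D2F := hD2fin.toFinset with hD2Fdef
  have hdesF : ∀ T : Finset (Fin n), T.card = t →
      (BF.filter (fun blk => T ⊆ blk)).card = ν := by
    intro T hT
    rw [← ncard_eq_card_filter B hBfin (fun blk => T ⊆ blk)]
    exact hdesign T hT
  have hBcardF : ∀ b ∈ BF, b.card = k := fun b hb => hBcard b (hBfin.mem_toFinset.mp hb)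
  have hc₁F : ∀ a b : Fin t → Fin k, Function.Injective a → Function.Injective b →
      (D1F.filter (fun g => ∀ i, g (a i) = b i)).card = c₁ := by
    intro a b ha hb
    rw [← ncard_eq_card_filter D₁ hD1fin _]
    exact hc₁ ⟨a, ha⟩ ⟨b, hb⟩
  have hc₂F : ∀ a b : Fin t → Fin (n-k), Function.Injective a → Function.Injective b →
      (D2F.filter (fun g => ∀ i, g (a i) = b i)).card = c₂ := by
    intro a b ha hb
    rw [← ncard_eq_card_filter D₂ hD2fin _]
    exact hc₂ ⟨a, ha⟩ ⟨b, hb⟩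
  refine ⟨ν * (c₁ * (c₂ * (n-k).descFactorial t)), ?_⟩
  intro a b
  -- the combined function
  set F : Finset (Fin n) → Equiv.Perm (Fin k) → Equiv.Perm (Fin (n - k)) → Fin n → Fin n :=
    fun blk π σ j => if h : (j : ℕ) < k then φ blk (π ⟨(j : ℕ), h⟩)
      else ψ blk (σ ⟨(j : ℕ) - k, by have := j.isLt; omega⟩) with hFdef
  have hFlt : ∀ blk π σ (j : Fin n) (h : (j : ℕ) < k),
      F blk π σ j = φ blk (π ⟨(j : ℕ), h⟩) := by
    intro blk π σ j h
    rw [hFdef]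
    exact dif_pos h
  have hFge : ∀ blk π σ (j : Fin n) (h : ¬ (j : ℕ) < k),
      F blk π σ j = ψ blk (σ ⟨(j : ℕ) - k, by have := j.isLt; omega⟩) := by
    intro blk π σ j h
    rw [hFdef]
    exact dif_neg h
  -- injectivity of F
  have hFinj : ∀ blk ∈ B, ∀ π σ, Function.Injective (F blk π σ) := by
    intro blk hblk π σ j₁ j₂ hj
    obtain ⟨hφi, hφr⟩ := hφ blk hblk
    obtain ⟨hψi, hψr⟩ := hψ blk hblk
    have hmemφ : ∀ y, φ blk y ∈ blk := by
      intro y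
      have : φ blk y ∈ Set.range (φ blk) := Set.mem_range_self y
      rw [hφr] at this
      exact this
    have hmemψ : ∀ y, ψ blk y ∉ blk := by
      intro y
      have : ψ blk y ∈ Set.range (ψ blk) := Set.mem_range_self y
      rw [hψr] at this
      exact this
    by_cases h1 : (j₁ : ℕ) < k <;> by_cases h2 : (j₂ : ℕ) < k
    · rw [hFlt blk π σ j₁ h1, hFlt blk π σ j₂ h2] at hj
      have hmk := π.injective (hφi hj)
      have hv := congrArg Fin.val hmk
      exact Fin.ext hv
    · rw [hFlt blk π σ j₁ h1, hFge blk π σ j₂ h2] at hj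
      exact absurd (hj ▸ hmemφ _) (hmemψ _)
    · rw [hFge blk π σ j₁ h1, hFlt blk π σ j₂ h2] at hj
      exact absurd (hj.symm ▸ hmemφ _) (hmemψ _)
    · rw [hFge blk π σ j₁ h1, hFge blk π σ j₂ h2] at hj
      have hmk := σ.injective (hψi hj)
      have hv := congrArg Fin.val hmk
      simp only [] at hv
      exact Fin.ext (by omega)
  -- block characterization
  have hblkchar : ∀ blk ∈ B, ∀ π σ (x : Fin n),
      x ∈ blk ↔ ∃ j : Fin n, (j : ℕ) < k ∧ F blk π σ j = x := by
    intro blk hblk π σ x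
    obtain ⟨hφi, hφr⟩ := hφ blk hblk
    constructor
    · intro hx
      have : x ∈ Set.range (φ blk) := by rw [hφr]; exact hx
      obtain ⟨y, hy⟩ := this
      set z := π.symm y with hz
      refine ⟨⟨(z : ℕ), lt_of_lt_of_le z.isLt hkn⟩, z.isLt, ?_⟩
      rw [hFlt blk π σ _ z.isLt]
      have : (⟨(z : ℕ), z.isLt⟩ : Fin k) = z := Fin.ext rfl
      rw [this, hz, Equiv.apply_symm_apply, hy]
    · rintro ⟨j, hjk, hj⟩
      rw [hFlt blk π σ j hjk] at hj
      have : φ blk (π ⟨(j : ℕ), hjk⟩) ∈ Set.range (φ blk) := Set.mem_range_self _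
      rw [hφr] at this
      exact hj ▸ this

  -- specialized unfoldings
  have hFlt2 : ∀ blk π σ (y : Fin k),
      F blk π σ ⟨(y : ℕ), lt_of_lt_of_le y.isLt hkn⟩ = φ blk (π y) := by
    intro blk π σ y
    refine (hFlt blk π σ _ (show ((⟨(y : ℕ), lt_of_lt_of_le y.isLt hkn⟩ : Fin n) : ℕ) < k
      from y.isLt)).trans ?_
    exact congrArg (fun z => φ blk (π z)) (Fin.ext rfl)
  have hFge2 : ∀ blk π σ (y : Fin (n - k)) (h : k + (y : ℕ) < n),
      F blk π σ ⟨k + (y : ℕ), h⟩ = ψ blk (σ y) := by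
    intro blk π σ y h
    refine (hFge blk π σ _ (show ¬ ((⟨k + (y : ℕ), h⟩ : Fin n) : ℕ) < k
      from Nat.not_lt.mpr (Nat.le_add_right k _))).trans ?_
    exact congrArg (fun z => ψ blk (σ z)) (Fin.ext (by simp))
  -- sizes
  set s := Fintype.card {i : Fin t // (a i : ℕ) < k} with hsdef
  have hsle : s ≤ t := by
    rw [hsdef]
    simpa using Fintype.card_subtype_le (fun i : Fin t => (a i : ℕ) < k)
  have hcompl : Fintype.card {i : Fin t // ¬ (a i : ℕ) < k} = t - s := by
    rw [Fintype.card_subtype_compl, Fintype.card_fin]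
  clear_value s
  -- the trace sets
  set I : Finset (Fin n) :=
    univ.image (fun p : {i : Fin t // (a i : ℕ) < k} => b p.1) with hIdef
  set J : Finset (Fin n) :=
    univ.image (fun p : {i : Fin t // ¬ (a i : ℕ) < k} => b p.1) with hJdef
  have hbinj : Function.Injective (fun p : {i : Fin t // (a i : ℕ) < k} => b p.1) :=
    fun p q h => Subtype.ext (b.injective h)
  have hbinj2 : Function.Injective (fun p : {i : Fin t // ¬ (a i : ℕ) < k} => b p.1) :=
    fun p q h => Subtype.ext (b.injective h)
  have hIcard : I.card = s := by
    rw [hIdef, Finset.card_image_of_injective _ hbinj, card_univ, hsdef]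
  have hJcard : J.card = t - s := by
    rw [hJdef, Finset.card_image_of_injective _ hbinj2, card_univ, hcompl]
  have hdisjIJ : Disjoint I J := by
    rw [Finset.disjoint_left]
    intro x hxI hxJ
    rw [hIdef, Finset.mem_image] at hxI
    rw [hJdef, Finset.mem_image] at hxJ
    obtain ⟨p, -, hp⟩ := hxI
    obtain ⟨q, -, hq⟩ := hxJ
    have hpq : p.1 = q.1 := b.injective (hp.trans hq.symm)
    exact q.2 (hpq ▸ p.2)
  set K := (c₁ * (k - s).descFactorial (t - s)) * (c₂ * (n - k - t + s).descFactorial s)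
    with hKdef
  -- the triple set
  set Tr := ((BF ×ˢ (D1F ×ˢ D2F)).filter
      (fun p => ∀ i, F p.1 p.2.1 p.2.2 (a i) = b i)) with hTrdef
  have hDfin : D.Finite := Set.toFinite D
  have hstep1 : {g ∈ D | ∀ i, g (a i) = b i}.ncard
      = (hDfin.toFinset.filter (fun g => ∀ i, g (a i) = b i)).card :=
    ncard_eq_card_filter D hDfin _
  have hbij : ∀ p : Finset (Fin n) × Equiv.Perm (Fin k) × Equiv.Perm (Fin (n - k)),
      p ∈ Tr → Function.Bijective (F p.1 p.2.1 p.2.2) := by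
    intro p hp
    rw [hTrdef, Finset.mem_filter] at hp
    have hp1 : p.1 ∈ B := hBfin.mem_toFinset.mp (Finset.mem_product.mp hp.1).1
    exact Finite.injective_iff_bijective.mp (hFinj p.1 hp1 _ _)
  have hstep2 : Tr.card
      = (hDfin.toFinset.filter (fun g => ∀ i, g (a i) = b i)).card := by
    refine Finset.card_bij (fun p hp => Equiv.ofBijective _ (hbij p hp)) ?_ ?_ ?_
    · intro p hp
      have hpm := Finset.mem_filter.mp (hTrdef ▸ hp)
      have hp1 : p.1 ∈ B := hBfin.mem_toFinset.mp (Finset.mem_product.mp hpm.1).1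
      have hp2 : p.2.1 ∈ D₁ := hD1fin.mem_toFinset.mp
        (Finset.mem_product.mp (Finset.mem_product.mp hpm.1).2).1
      have hp3 : p.2.2 ∈ D₂ := hD2fin.mem_toFinset.mp
        (Finset.mem_product.mp (Finset.mem_product.mp hpm.1).2).2
      rw [Finset.mem_filter]
      constructor
      · rw [Set.Finite.mem_toFinset, hD]
        exact ⟨p.1, hp1, p.2.1, hp2, p.2.2, hp3, fun j => rfl⟩
      · exact hpm.2
    · intro p hp q hq heq
      have hpm := Finset.mem_filter.mp (hTrdef ▸ hp)
      have hqm := Finset.mem_filter.mp (hTrdef ▸ hq)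
      have hp1 : p.1 ∈ B := hBfin.mem_toFinset.mp (Finset.mem_product.mp hpm.1).1
      have hq1 : q.1 ∈ B := hBfin.mem_toFinset.mp (Finset.mem_product.mp hqm.1).1
      have hfun : F p.1 p.2.1 p.2.2 = F q.1 q.2.1 q.2.2 :=
        congrArg (fun e : Equiv.Perm (Fin n) => (e : Fin n → Fin n)) heq
      have hblkeq : p.1 = q.1 := by
        ext x
        rw [hblkchar p.1 hp1 p.2.1 p.2.2 x, hblkchar q.1 hq1 q.2.1 q.2.2 x, hfun]
      have hπeq : p.2.1 = q.2.1 := by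
        apply Equiv.ext
        intro x
        have h3 := congrFun hfun (⟨(x : ℕ), lt_of_lt_of_le x.isLt hkn⟩ : Fin n)
        rw [hFlt2 p.1 p.2.1 p.2.2 x, hFlt2 q.1 q.2.1 q.2.2 x, ← hblkeq] at h3
        exact (hφ p.1 hp1).1 h3
      have hσeq : p.2.2 = q.2.2 := by
        apply Equiv.ext
        intro x
        have hxn : k + (x : ℕ) < n := by have := x.isLt; omega
        have h3 := congrFun hfun (⟨k + (x : ℕ), hxn⟩ : Fin n)
        rw [hFge2 p.1 p.2.1 p.2.2 x hxn, hFge2 q.1 q.2.1 q.2.2 x hxn, ← hblkeq] at h3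
        exact (hψ p.1 hp1).1 h3
      exact Prod.ext hblkeq (Prod.ext hπeq hσeq)
    · intro g hg
      obtain ⟨hgD, hgcond⟩ := Finset.mem_filter.mp hg
      rw [Set.Finite.mem_toFinset, hD] at hgD
      obtain ⟨blk, hblk, π, hπ, σ, hσ, hform⟩ := hgD
      have hmemTr : (blk, π, σ) ∈ Tr := by
        rw [hTrdef, Finset.mem_filter]
        refine ⟨Finset.mem_product.mpr ⟨hBfin.mem_toFinset.mpr hblk,
          Finset.mem_product.mpr ⟨hD1fin.mem_toFinset.mpr hπ, hD2fin.mem_toFinset.mpr hσ⟩⟩,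
          fun i => ?_⟩
        exact ((hform (a i)).symm).trans (hgcond i)
      exact ⟨(blk, π, σ), hmemTr, Equiv.ext fun j => (hform j).symm⟩
  -- per-block count
  have hperblk : ∀ blk ∈ BF,
      (Tr.filter (fun p => p.1 = blk)).card
        = if I ⊆ blk ∧ ∀ x ∈ J, x ∉ blk then K else 0 := by
    intro blk hblkBF
    have hblkB : blk ∈ B := hBfin.mem_toFinset.mp hblkBF
    obtain ⟨hφi, hφr⟩ := hφ blk hblkB
    obtain ⟨hψi, hψr⟩ := hψ blk hblkB
    rw [hTrdef, card_fiber_fst BF (D1F ×ˢ D2F)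
      (fun p => ∀ i, F p.1 p.2.1 p.2.2 (a i) = b i) blk hblkBF]
    have hfilter : (D1F ×ˢ D2F).filter
        (fun q => ∀ i, F (blk, q).1 (blk, q).2.1 (blk, q).2.2 (a i) = b i)
        = (D1F.filter (fun π => ∀ i : Fin t, ∀ h : (a i : ℕ) < k,
              φ blk (π ⟨(a i : ℕ), h⟩) = b i))
          ×ˢ (D2F.filter (fun σ => ∀ i : Fin t, ∀ h : ¬ (a i : ℕ) < k,
              ψ blk (σ ⟨(a i : ℕ) - k, by have := (a i).isLt; omega⟩) = b i)) := by
      rw [← Finset.filter_product]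
      apply filter_congr
      intro q _
      constructor
      · intro hall
        constructor
        · intro i h
          rw [← hFlt blk q.1 q.2 (a i) h]
          exact hall i
        · intro i h
          rw [← hFge blk q.1 q.2 (a i) h]
          exact hall i
      · rintro ⟨h1, h2⟩ i
        by_cases h : (a i : ℕ) < k
        · rw [hFlt blk q.1 q.2 (a i) h]
          exact h1 i h
        · rw [hFge blk q.1 q.2 (a i) h]
          exact h2 i h
    rw [hfilter, Finset.card_product]
    by_cases hcomp : I ⊆ blk ∧ ∀ x ∈ J, x ∉ blk
    · rw [if_pos hcomp]
      have hπcount : (D1F.filter (fun π => ∀ i : Fin t, ∀ h : (a i : ℕ) < k,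
            φ blk (π ⟨(a i : ℕ), h⟩) = b i)).card
          = c₁ * (k - s).descFactorial (t - s) := by
        have hbmem : ∀ p : {i : Fin t // (a i : ℕ) < k}, ∃ y, φ blk y = b p.1 := by
          intro p
          have hmem : b p.1 ∈ blk := hcomp.1
            (by rw [hIdef]; exact Finset.mem_image_of_mem _ (mem_univ p))
          have h2 : (b p.1 : Fin n) ∈ Set.range (φ blk) := by
            rw [hφr]; exact hmem
          exact h2
        set Atar := fun p => (hbmem p).choose with hAtar
        have hAtarspec : ∀ p, φ blk (Atar p) = b p.1 := fun p => (hbmem p).choose_spec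
        have hcongr : D1F.filter (fun π => ∀ i : Fin t, ∀ h : (a i : ℕ) < k,
              φ blk (π ⟨(a i : ℕ), h⟩) = b i)
            = D1F.filter (fun π => ∀ p : {i : Fin t // (a i : ℕ) < k},
                π ⟨(a p.1 : ℕ), p.2⟩ = Atar p) := by
          apply filter_congr
          intro π _
          constructor
          · intro h p
            exact hφi ((h p.1 p.2).trans (hAtarspec p).symm)
          · intro h i hik
            have h5 := congrArg (φ blk) (h ⟨i, hik⟩)
            rw [hAtarspec ⟨i, hik⟩] at h5
            exact h5
        rw [hcongr]
        have hAdominj : Function.Injective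
            (fun p : {i : Fin t // (a i : ℕ) < k} => (⟨(a p.1 : ℕ), p.2⟩ : Fin k)) := by
          intro p q h
          have hv := congrArg Fin.val h
          exact Subtype.ext (a.injective (Fin.ext hv))
        have hAtarinj : Function.Injective Atar := by
          intro p q h
          have hb2 : b p.1 = b q.1 := by rw [← hAtarspec p, ← hAtarspec q, h]
          exact Subtype.ext (b.injective hb2)
        have hfinal := lemS' htk D1F c₁ hc₁F {i : Fin t // (a i : ℕ) < k}
          s hsdef.symm hsle
          (fun p => (⟨(a p.1 : ℕ), p.2⟩ : Fin k)) Atar hAdominj hAtarinj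
        exact hfinal
      have hσcount : (D2F.filter (fun σ => ∀ i : Fin t, ∀ h : ¬ (a i : ℕ) < k,
            ψ blk (σ ⟨(a i : ℕ) - k, by have := (a i).isLt; omega⟩) = b i)).card
          = c₂ * (n - k - t + s).descFactorial s := by
        have hbmem : ∀ p : {i : Fin t // ¬ (a i : ℕ) < k}, ∃ y, ψ blk y = b p.1 := by
          intro p
          have hmem : b p.1 ∉ blk := hcomp.2 _
            (by rw [hJdef]; exact Finset.mem_image_of_mem _ (mem_univ p))
          have h2 : (b p.1 : Fin n) ∈ Set.range (ψ blk) := by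
            rw [hψr]
            simpa using hmem
          exact h2
        set Btar := fun p => (hbmem p).choose with hBtar
        have hBtarspec : ∀ p, ψ blk (Btar p) = b p.1 := fun p => (hbmem p).choose_spec
        have hcongr : D2F.filter (fun σ => ∀ i : Fin t, ∀ h : ¬ (a i : ℕ) < k,
              ψ blk (σ ⟨(a i : ℕ) - k, by have := (a i).isLt; omega⟩) = b i)
            = D2F.filter (fun σ => ∀ p : {i : Fin t // ¬ (a i : ℕ) < k},
                σ ⟨(a p.1 : ℕ) - k, by have := (a p.1).isLt; omega⟩ = Btar p) := by
          apply filter_congr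
          intro σ _
          constructor
          · intro h p
            exact hψi ((h p.1 p.2).trans (hBtarspec p).symm)
          · intro h i hik
            have h5 := congrArg (ψ blk) (h ⟨i, hik⟩)
            rw [hBtarspec ⟨i, hik⟩] at h5
            exact h5
        rw [hcongr]
        have hAdominj : Function.Injective
            (fun p : {i : Fin t // ¬ (a i : ℕ) < k} =>
              (⟨(a p.1 : ℕ) - k, by have := (a p.1).isLt; omega⟩ : Fin (n - k))) := by
          intro p q h
          have hv := congrArg Fin.val h
          simp only [] at hv
          have hp2 := p.2
          have hq2 := q.2
          exact Subtype.ext (a.injective (Fin.ext (by omega)))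
        have hBtarinj : Function.Injective Btar := by
          intro p q h
          have hb2 : b p.1 = b q.1 := by rw [← hBtarspec p, ← hBtarspec q, h]
          exact Subtype.ext (b.injective hb2)
        have hfinal := lemS' htnk D2F c₂ hc₂F {i : Fin t // ¬ (a i : ℕ) < k}
          (t - s) hcompl (by omega)
          (fun p => (⟨(a p.1 : ℕ) - k, by have := (a p.1).isLt; omega⟩ : Fin (n - k)))
          Btar hAdominj hBtarinj
        have e1 : (n - k) - (t - s) = n - k - t + s := by omega
        have e2 : t - (t - s) = s := by omega
        rw [e1, e2] at hfinal
        exact hfinal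
      rw [hπcount, hσcount, hKdef]
    · rw [if_neg hcomp]
      by_cases hIs : I ⊆ blk
      · have hJs : ¬ ∀ x ∈ J, x ∉ blk := fun h => hcomp ⟨hIs, h⟩
        push_neg at hJs
        obtain ⟨x, hxJ, hxblk⟩ := hJs
        rw [hJdef, Finset.mem_image] at hxJ
        obtain ⟨p, -, hp⟩ := hxJ
        have hempty : (D2F.filter (fun σ => ∀ i : Fin t, ∀ h : ¬ (a i : ℕ) < k,
            ψ blk (σ ⟨(a i : ℕ) - k, by have := (a i).isLt; omega⟩) = b i)).card = 0 := by
          rw [Finset.card_eq_zero, Finset.filter_eq_empty_iff]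
          intro σ _ hcond
          have h5 := hcond p.1 p.2
          rw [hp] at h5
          have h6 : x ∈ Set.range (ψ blk) := ⟨_, h5⟩
          rw [hψr] at h6
          simp only [Set.mem_compl_iff, Finset.mem_coe] at h6
          exact h6 hxblk
        rw [hempty, Nat.mul_zero]
      · have hJs : ∃ x ∈ I, x ∉ blk := by
          by_contra h
          push_neg at h
          exact hIs h
        obtain ⟨x, hxI, hxblk⟩ := hJs
        rw [hIdef, Finset.mem_image] at hxI
        obtain ⟨p, -, hp⟩ := hxI
        have hempty : (D1F.filter (fun π => ∀ i : Fin t, ∀ h : (a i : ℕ) < k,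
            φ blk (π ⟨(a i : ℕ), h⟩) = b i)).card = 0 := by
          rw [Finset.card_eq_zero, Finset.filter_eq_empty_iff]
          intro π _ hcond
          have h5 := hcond p.1 p.2
          rw [hp] at h5
          have h6 : x ∈ Set.range (φ blk) := ⟨_, h5⟩
          rw [hφr] at h6
          exact hxblk h6
        rw [hempty, Nat.zero_mul]
  -- sum over blocks
  have hTrcard : Tr.card
      = (BF.filter (fun blk => I ⊆ blk ∧ ∀ x ∈ J, x ∉ blk)).card * K := by
    rw [Finset.card_eq_sum_card_fiberwise
      (f := fun p : Finset (Fin n) × Equiv.Perm (Fin k) × Equiv.Perm (Fin (n - k)) => p.1)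
      (t := BF)
      (fun p hp => (Finset.mem_product.mp (Finset.mem_filter.mp (hTrdef ▸ hp)).1).1)]
    rw [Finset.sum_congr rfl hperblk, ← Finset.sum_filter, Finset.sum_const, smul_eq_mul]
  -- design count
  have hNB := design_count htk hkn htnk BF hBcardF hdesF (t - s) s (by omega) I J
    hIcard hJcard hdisjIJ
  have hnt : (n - s) - (t - s) = n - t := by omega
  rw [hnt] at hNB
  -- conclusion
  rw [hstep1, ← hstep2, hTrcard]
  have hCpos : 0 < (n - t).choose (k - t) := Nat.choose_pos (by omega)
  apply Nat.eq_of_mul_eq_mul_right hCpos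
  have hfi := final_identity (ν := ν) hsle htk htnk hkn
  calc (BF.filter (fun blk => I ⊆ blk ∧ ∀ x ∈ J, x ∉ blk)).card * K
        * (n - t).choose (k - t)
      = ((BF.filter (fun blk => I ⊆ blk ∧ ∀ x ∈ J, x ∉ blk)).card * (n - t).choose (k - t))
        * ((k - s).descFactorial (t - s) * (n - k - t + s).descFactorial s) * (c₁ * c₂) := by
        rw [hKdef]; ring
    _ = (ν * (n - t).choose (k - s))
        * ((k - s).descFactorial (t - s) * (n - k - t + s).descFactorial s) * (c₁ * c₂) := by
        rw [hNB]
    _ = ((ν * (n - k).descFactorial t) * (n - t).choose (k - t)) * (c₁ * c₂) := by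
        rw [hfi]
    _ = ν * (c₁ * (c₂ * (n - k).descFactorial t)) * (n - t).choose (k - t) := by ring
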